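/- arXiv:2105.06819 — 2 statements merged into one kernel-verified Lean document; each statement's English description precedes it below -/
import Mathlib

section
/- Let G be a finite simple graph whose number of vertices p equals its number of edges q. Then the adjacency matrices of S(G)_2 and of S(G)_0^1 have the same characteristic polynomial; that is, S(G)_2 and S(G)_0^1 are cospectral. -/
open Matrix

noncomputable section

/-- The multiplicity of `μ` as an eigenvalue of a real matrix `M`:
the dimension of the kernel of `M - μ·Id`. -/
def eigMult {n : Type} [Fintype n] [DecidableEq n] (M : Matrix n n ℝ) (μ : ℝ) : ℕ :=
  Module.finrank ℝ (LinearMap.ker (Matrix.toLin' (M - μ • (1 : Matrix n n ℝ))))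

/-- The energy of a real symmetric matrix: the sum of the absolute values of its
eigenvalues, counted with multiplicity. -/
def matEnergy {n : Type} [Fintype n] [DecidableEq n] (M : Matrix n n ℝ) : ℝ :=
  if h : M.IsHermitian then ∑ i, |h.eigenvalues i| else 0

/-- The incidence matrix of a graph, rows indexed by vertices, columns by edges. -/
def incid {V : Type} [DecidableEq V] (G : SimpleGraph V) : Matrix V G.edgeSet ℝ :=
  fun v e => if v ∈ (e : Sym2 V) then 1 else 0

/-- Adjacency matrix of the subdivision graph `S(G)`. -/
def AS {V : Type} [DecidableEq V] (G : SimpleGraph V) :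
    Matrix (V ⊕ G.edgeSet) (V ⊕ G.edgeSet) ℝ :=
  Matrix.fromBlocks 0 (incid G) (incid G)ᵀ 0

/-- Adjacency matrix of `S(G)_k`. -/
def ASk {V : Type} [DecidableEq V] (G : SimpleGraph V) (k : ℕ) :
    Matrix (V ⊕ (Fin k × G.edgeSet)) (V ⊕ (Fin k × G.edgeSet)) ℝ :=
  fun x y => match x, y with
    | Sum.inl v, Sum.inr (_, e) => if v ∈ (e : Sym2 V) then 1 else 0
    | Sum.inr (_, e), Sum.inl v => if v ∈ (e : Sym2 V) then 1 else 0
    | _, _ => 0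

/-- Adjacency matrix of `S(G)_t^n`. -/
def AStn {V : Type} [DecidableEq V] (G : SimpleGraph V) (n t : ℕ) :
    Matrix ((Fin (n + 1) × V) ⊕ (Fin (t + 1) × G.edgeSet))
           ((Fin (n + 1) × V) ⊕ (Fin (t + 1) × G.edgeSet)) ℝ :=
  fun x y => match x, y with
    | Sum.inl (_, v), Sum.inr (_, e) => if v ∈ (e : Sym2 V) then 1 else 0
    | Sum.inr (_, e), Sum.inl (_, v) => if v ∈ (e : Sym2 V) then 1 else 0
    | _, _ => 0

/-- The subdivision graph `S(G)` as a simple graph. -/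
def SGGraph {V : Type} (G : SimpleGraph V) : SimpleGraph (V ⊕ G.edgeSet) where
  Adj x y :=
    (∃ (v : V) (e : G.edgeSet), x = Sum.inl v ∧ y = Sum.inr e ∧ v ∈ (e : Sym2 V)) ∨
    (∃ (v : V) (e : G.edgeSet), x = Sum.inr e ∧ y = Sum.inl v ∧ v ∈ (e : Sym2 V))
  symm := by
    constructor
    rintro x y (⟨v, e, rfl, rfl, h⟩ | ⟨v, e, rfl, rfl, h⟩)
    · exact Or.inr ⟨v, e, rfl, rfl, h⟩
    · exact Or.inl ⟨v, e, rfl, rfl, h⟩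
  loopless := by
    constructor
    rintro x (⟨v, e, h1, h2, _⟩ | ⟨v, e, h1, h2, _⟩) <;> subst h1 <;> simp_all

/-- The graph `S(G)_k`. -/
def SGkGraph {V : Type} (G : SimpleGraph V) (k : ℕ) :
    SimpleGraph (V ⊕ (Fin k × G.edgeSet)) where
  Adj x y :=
    (∃ (v : V) (ie : Fin k × G.edgeSet),
        x = Sum.inl v ∧ y = Sum.inr ie ∧ v ∈ (ie.2 : Sym2 V)) ∨
    (∃ (v : V) (ie : Fin k × G.edgeSet),
        x = Sum.inr ie ∧ y = Sum.inl v ∧ v ∈ (ie.2 : Sym2 V))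
  symm := by
    constructor
    rintro x y (⟨v, ie, rfl, rfl, h⟩ | ⟨v, ie, rfl, rfl, h⟩)
    · exact Or.inr ⟨v, ie, rfl, rfl, h⟩
    · exact Or.inl ⟨v, ie, rfl, rfl, h⟩
  loopless := by
    constructor
    rintro x (⟨v, ie, h1, h2, _⟩ | ⟨v, ie, h1, h2, _⟩) <;> subst h1 <;> simp_all

/-- The graph `S(G)_t^n`. -/
def SGtnGraph {V : Type} (G : SimpleGraph V) (n t : ℕ) :
    SimpleGraph ((Fin (n + 1) × V) ⊕ (Fin (t + 1) × G.edgeSet)) where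
  Adj x y :=
    (∃ (iv : Fin (n + 1) × V) (je : Fin (t + 1) × G.edgeSet),
        x = Sum.inl iv ∧ y = Sum.inr je ∧ iv.2 ∈ (je.2 : Sym2 V)) ∨
    (∃ (iv : Fin (n + 1) × V) (je : Fin (t + 1) × G.edgeSet),
        x = Sum.inr je ∧ y = Sum.inl iv ∧ iv.2 ∈ (je.2 : Sym2 V))
  symm := by
    constructor
    rintro x y (⟨iv, je, rfl, rfl, h⟩ | ⟨iv, je, rfl, rfl, h⟩)
    · exact Or.inr ⟨iv, je, rfl, rfl, h⟩
    · exact Or.inl ⟨iv, je, rfl, rfl, h⟩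
  loopless := by
    constructor
    rintro x (⟨iv, je, h1, h2, _⟩ | ⟨iv, je, h1, h2, _⟩) <;> subst h1 <;> simp_all

open scoped Classical in
/-- The Randić matrix of a graph: entry `1/√(deg u · deg v)` when `u ~ v`, else `0`. -/
def randicMatrix {W : Type} (H : SimpleGraph W) : Matrix W W ℝ :=
  fun u v =>
    if H.Adj u v then
      1 / Real.sqrt ((Nat.card (H.neighborSet u) * Nat.card (H.neighborSet v) : ℕ) : ℝ)
    else 0

/-- `H` has no isolated vertices. -/
def NoIsolated {W : Type} (H : SimpleGraph W) : Prop := ∀ v, ∃ u, H.Adj v u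

/-- The matrix `B` used in the construction of `F₁^m(G)`: all entries `1`
except `B(1,1) = 0` and `B(i, m+1-i) = 0` for `2 ≤ i ≤ m-1` (1-based indexing). -/
def Bmat (m : ℕ) : Matrix (Fin m) (Fin m) ℝ :=
  fun i j =>
    if (i.val = 0 ∧ j.val = 0) ∨ (i.val ≠ 0 ∧ j.val ≠ 0 ∧ i.val + j.val = m - 1) then 0 else 1

lemma Bmat_symm (m : ℕ) (i j : Fin m) : Bmat m i j = Bmat m j i := by
  unfold Bmat
  by_cases h : (i.val = 0 ∧ j.val = 0) ∨ (i.val ≠ 0 ∧ j.val ≠ 0 ∧ i.val + j.val = m - 1)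
  · rw [if_pos h, if_pos (by omega)]
  · rw [if_neg h, if_neg (by omega)]

/-- The graph `F₁^m(G)`: `(i,u) ~ (j,v)` iff `B(i,j) = 1` and `u ~ v` in `G`. -/
def F1Graph {V : Type} (m : ℕ) (G : SimpleGraph V) : SimpleGraph (Fin m × V) where
  Adj x y := Bmat m x.1 y.1 = 1 ∧ G.Adj x.2 y.2
  symm := by
    constructor
    rintro x y ⟨hb, ha⟩
    refine ⟨?_, ha.symm⟩
    rw [Bmat_symm]; exact hb
  loopless := ⟨fun x h => G.loopless.1 x.2 h.2⟩

/-- The matrix `H` used in the construction of `F₂^m(G)`: all entries `1`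
except `H(i,i) = 0` for `2 ≤ i ≤ m` (1-based indexing). -/
def HmatF2 (m : ℕ) : Matrix (Fin m) (Fin m) ℝ :=
  fun i j => if i.val = j.val ∧ i.val ≠ 0 then 0 else 1

lemma HmatF2_symm (m : ℕ) (i j : Fin m) : HmatF2 m i j = HmatF2 m j i := by
  unfold HmatF2
  by_cases h : i.val = j.val ∧ i.val ≠ 0
  · rw [if_pos h, if_pos (by omega)]
  · rw [if_neg h, if_neg (by omega)]

/-- The graph `F₂^m(G)`: `(i,u) ~ (j,v)` iff `H(i,j) = 1` and `u ~ v` in `G`. -/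
def F2Graph {V : Type} (m : ℕ) (G : SimpleGraph V) : SimpleGraph (Fin m × V) where
  Adj x y := HmatF2 m x.1 y.1 = 1 ∧ G.Adj x.2 y.2
  symm := by
    constructor
    rintro x y ⟨hb, ha⟩
    refine ⟨?_, ha.symm⟩
    rw [HmatF2_symm]; exact hb
  loopless := ⟨fun x h => G.loopless.1 x.2 h.2⟩

/-- The tensor (Kronecker) product of simple graphs. -/
def tensorGraph {W U : Type} (H : SimpleGraph W) (G : SimpleGraph U) :
    SimpleGraph (W × U) where
  Adj x y := H.Adj x.1 y.1 ∧ G.Adj x.2 y.2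
  symm := ⟨fun _ _ h => ⟨h.1.symm, h.2.symm⟩⟩
  loopless := ⟨fun x h => H.loopless.1 x.1 h.1⟩

open Polynomial in
lemma my_eval_charpoly {n : Type} [Fintype n] [DecidableEq n] (M : Matrix n n ℝ) (r : ℝ) :
    M.charpoly.eval r = (r • (1 : Matrix n n ℝ) - M).det := by
  unfold Matrix.charpoly
  rw [show (Polynomial.eval r : ℝ[X] → ℝ) = (Polynomial.evalRingHom r : ℝ[X] →+* ℝ) from rfl,
    RingHom.map_det]
  congr 1
  ext i j
  by_cases h : i = j
  · subst h; simp [charmatrix_apply_eq, Matrix.one_apply]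
  · simp [charmatrix_apply_ne _ _ _ h, Matrix.one_apply, h]

lemma my_det_blocks_PQQP {n : Type} [Fintype n] [DecidableEq n] (P Q : Matrix n n ℝ) :
    (Matrix.fromBlocks P Q Q P).det = (P + Q).det * (P - Q).det := by
  have key : (Matrix.fromBlocks (1 : Matrix n n ℝ) 1 0 1) * (Matrix.fromBlocks P Q Q P) *
      (Matrix.fromBlocks (1 : Matrix n n ℝ) (-1) 0 1) =
      Matrix.fromBlocks (P + Q) 0 Q (P - Q) := by
    simp [Matrix.fromBlocks_multiply, Matrix.mul_neg]
    constructor <;> abel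
  have hd := congrArg Matrix.det key
  rw [Matrix.det_mul, Matrix.det_mul, Matrix.det_fromBlocks_zero₂₁,
    Matrix.det_fromBlocks_zero₂₁, Matrix.det_fromBlocks_zero₁₂, Matrix.det_one] at hd
  simpa using hd

def eqSum (α : Type) : (α ⊕ α) ≃ (Fin 2 × α) where
  toFun := Sum.elim (fun a => (0, a)) (fun a => (1, a))
  invFun x := if x.1 = 0 then .inl x.2 else .inr x.2
  left_inv := by rintro (a | a) <;> simp
  right_inv := by rintro ⟨i, a⟩; fin_cases i <;> simp

def eqOne (α : Type) : α ≃ (Fin 1 × α) where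
  toFun a := (0, a)
  invFun x := x.2
  left_inv := fun a => rfl
  right_inv := by rintro ⟨i, a⟩; simp [Subsingleton.elim i 0]

/-- if `p = q`, then `S(G)_2` and `S(G)_0^1` are cospectral, i.e. their
adjacency matrices have the same characteristic polynomial. -/
theorem stmt_9 (V : Type) [Fintype V] [DecidableEq V] (G : SimpleGraph V) [DecidableRel G.Adj]
    (hpq : Fintype.card V = Fintype.card G.edgeSet) :
    (ASk G 2).charpoly = (AStn G 1 0).charpoly := by
  classical
  apply Polynomial.eq_of_infinite_eval_eq
  apply Set.Infinite.mono (s := ({0}ᶜ : Set ℝ)) ?_ ((Set.finite_singleton (0:ℝ)).infinite_compl)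
  intro r hr
  have hr : r ≠ 0 := hr
  simp only [Set.mem_setOf_eq, my_eval_charpoly]
  set p := Fintype.card V with hp
  set q := Fintype.card G.edgeSet with hq
  set c := r⁻¹ with hc
  set K : Matrix G.edgeSet G.edgeSet ℝ := (incid G)ᵀ * incid G with hK
  set D : Matrix G.edgeSet G.edgeSet ℝ := r • 1 - (2 * c) • K with hD
  -- LHS
  set N : Matrix V (Fin 2 × G.edgeSet) ℝ := fun v ie => if v ∈ (ie.2 : Sym2 V) then 1 else 0
    with hN
  have hA : r • (1 : Matrix (V ⊕ (Fin 2 × G.edgeSet)) _ ℝ) - ASk G 2 =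
      Matrix.fromBlocks (r • 1) (-N) (-Nᵀ) (r • 1) := by
    ext x y
    rcases x with v | ⟨i, e⟩ <;> rcases y with u | ⟨j, f⟩ <;>
      simp [ASk, Matrix.one_apply, hN, Prod.ext_iff, Matrix.transpose, Matrix.of_apply, Pi.neg_apply, Matrix.neg_apply] <;> rfl
  letI : Invertible (r • (1 : Matrix V V ℝ)) :=
    ⟨c • 1, by rw [Matrix.smul_mul, Matrix.one_mul, smul_smul, hc, inv_mul_cancel₀ hr, one_smul],
      by rw [Matrix.smul_mul, Matrix.one_mul, smul_smul, hc, mul_inv_cancel₀ hr, one_smul]⟩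
  have hinv : ⅟(r • (1 : Matrix V V ℝ)) = c • 1 := rfl
  rw [hA, Matrix.det_fromBlocks₁₁, hinv]
  have hschur : r • (1 : Matrix (Fin 2 × G.edgeSet) (Fin 2 × G.edgeSet) ℝ) -
      (-Nᵀ) * (c • (1 : Matrix V V ℝ)) * (-N) = r • 1 - c • (Nᵀ * N) := by
    simp [Matrix.neg_mul, Matrix.mul_neg, Matrix.mul_smul, Matrix.smul_mul]
  rw [hschur]
  have hNN : ∀ i e j f, (Nᵀ * N) (i, e) (j, f) = K e f := by
    intro i e j f
    rw [Matrix.mul_apply, hK, Matrix.mul_apply]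
    simp [hN, incid, Matrix.transpose, Matrix.of_apply, Pi.neg_apply]
  have hsub : (r • (1 : Matrix (Fin 2 × G.edgeSet) (Fin 2 × G.edgeSet) ℝ) - c • (Nᵀ * N)).submatrix
      (eqSum G.edgeSet) (eqSum G.edgeSet) =
      Matrix.fromBlocks (r • 1 - c • K) (-(c • K)) (-(c • K)) (r • 1 - c • K) := by
    ext x y
    rcases x with e | e <;> rcases y with f | f <;>
      simp [eqSum, Matrix.one_apply, hNN, Prod.ext_iff]
  have hdet1 : (r • (1 : Matrix (Fin 2 × G.edgeSet) (Fin 2 × G.edgeSet) ℝ) - c • (Nᵀ * N)).det =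
      D.det * r ^ q := by
    rw [← Matrix.det_submatrix_equiv_self (eqSum G.edgeSet), hsub, my_det_blocks_PQQP]
    congr 1
    · congr 1; rw [hD]; ext e f; simp; ring
    · simp [hq]
  rw [hdet1]
  -- RHS
  set M : Matrix (Fin 2 × V) (Fin 1 × G.edgeSet) ℝ :=
    fun iv je => if iv.2 ∈ (je.2 : Sym2 V) then 1 else 0 with hM
  have hB : r • (1 : Matrix ((Fin 2 × V) ⊕ (Fin 1 × G.edgeSet)) _ ℝ) - AStn G 1 0 =
      Matrix.fromBlocks (r • 1) (-M) (-Mᵀ) (r • 1) := by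
    ext x y
    rcases x with ⟨i, v⟩ | ⟨i, e⟩ <;> rcases y with ⟨j, u⟩ | ⟨j, f⟩ <;>
      simp [AStn, Matrix.one_apply, hM, Prod.ext_iff, Matrix.transpose, Matrix.of_apply, Pi.neg_apply, Matrix.neg_apply] <;> rfl
  letI : Invertible (r • (1 : Matrix (Fin 2 × V) (Fin 2 × V) ℝ)) :=
    ⟨c • 1, by rw [Matrix.smul_mul, Matrix.one_mul, smul_smul, hc, inv_mul_cancel₀ hr, one_smul],
      by rw [Matrix.smul_mul, Matrix.one_mul, smul_smul, hc, mul_inv_cancel₀ hr, one_smul]⟩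
  have hinv2 : ⅟(r • (1 : Matrix (Fin 2 × V) (Fin 2 × V) ℝ)) = c • 1 := rfl
  rw [hB, Matrix.det_fromBlocks₁₁, hinv2]
  have hschur2 : r • (1 : Matrix (Fin 1 × G.edgeSet) (Fin 1 × G.edgeSet) ℝ) -
      (-Mᵀ) * (c • (1 : Matrix (Fin 2 × V) (Fin 2 × V) ℝ)) * (-M) = r • 1 - c • (Mᵀ * M) := by
    simp [Matrix.neg_mul, Matrix.mul_neg, Matrix.mul_smul, Matrix.smul_mul]
  rw [hschur2]
  have hMM : ∀ i e j f, (Mᵀ * M) (i, e) (j, f) = 2 * K e f := by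
    intro i e j f
    rw [Matrix.mul_apply, hK, Matrix.mul_apply]
    simp [hM, incid, Fintype.sum_prod_type, Fin.sum_univ_two, Matrix.transpose, Matrix.of_apply, Pi.neg_apply]
    ring
  have hdet2 : (r • (1 : Matrix (Fin 1 × G.edgeSet) (Fin 1 × G.edgeSet) ℝ) - c • (Mᵀ * M)).det = D.det := by
    rw [← Matrix.det_submatrix_equiv_self (eqOne G.edgeSet)]
    congr 1
    ext e f
    simp [eqOne, Matrix.one_apply, hMM, hD]
    ring
  rw [hdet2]
  have h1 : (r • (1 : Matrix V V ℝ)).det = r ^ p := by simp [hp]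
  have h2 : (r • (1 : Matrix (Fin 2 × V) (Fin 2 × V) ℝ)).det = r ^ (2 * p) := by
    simp [hp, Fintype.card_prod]
  rw [h1, h2, ← hpq]
  ring


end
end

section
/- Let m > 3 be an even integer and let G be a nonsingular finite simple graph satisfying the property (SR). Then F_1^m(G) is nonsingular and satisfies the property (-SR): for every eigenvalue μ of the adjacency matrix of F_1^m(G), the number −1/μ is also an eigenvalue, and μ and −1/μ have the same multiplicity. -/
open Matrix

noncomputable section

namespace Pf

variable {n : Type} [Fintype n] [DecidableEq n]

lemma toLin'_isUnit {M : Matrix n n ℝ} (h : IsUnit M) :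
    LinearMap.ker (Matrix.toLin' M) = ⊥ := by
  apply LinearMap.ker_eq_bot_of_inverse (f := Matrix.toLin' M) (g := Matrix.toLin' M⁻¹)
  rw [← Matrix.toLin'_mul, Matrix.nonsing_inv_mul M (h.map (Matrix.detMonoidHom))]
  exact Matrix.toLin'_one

lemma eigMult_zero_of_isUnit {M : Matrix n n ℝ} (h : IsUnit M) : eigMult M 0 = 0 := by
  unfold eigMult
  rw [zero_smul, sub_zero, toLin'_isUnit h, finrank_bot]

lemma eigMult_pos_ne_zero {M : Matrix n n ℝ} (h : IsUnit M) {μ : ℝ}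
    (hpos : 0 < eigMult M μ) : μ ≠ 0 := by
  rintro rfl
  rw [eigMult_zero_of_isUnit h] at hpos
  exact lt_irrefl 0 hpos

/-- kernels of toLin' of equal matrices with composition with invertible on right. -/
lemma finrank_ker_comp_unit (f : (n → ℝ) →ₗ[ℝ] (n → ℝ)) {P : Matrix n n ℝ}
    (hP : IsUnit P) :
    Module.finrank ℝ (LinearMap.ker (f ∘ₗ Matrix.toLin' P)) =
      Module.finrank ℝ (LinearMap.ker f) := by
  have hInv : Invertible P := P.invertibleOfIsUnitDet (h := by
    simpa using hP.map Matrix.detMonoidHom)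
  let e : (n → ℝ) ≃ₗ[ℝ] (n → ℝ) := P.toLinearEquiv' hInv
  have he : (e : (n → ℝ) →ₗ[ℝ] (n → ℝ)) = Matrix.toLin' P := rfl
  rw [← he, LinearMap.ker_comp, Submodule.comap_equiv_eq_map_symm,
    LinearEquiv.finrank_map_eq]


lemma eigMult_conj (M P Q : Matrix n n ℝ) (hPQ : P * Q = 1) (hQP : Q * P = 1) (μ : ℝ) :
    eigMult (P * M * Q) μ = eigMult M μ := by
  have hP : IsUnit P := @isUnit_of_invertible _ _ _ (invertibleOfRightInverse _ _ hPQ)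
  have hQ : IsUnit Q := @isUnit_of_invertible _ _ _ (invertibleOfRightInverse _ _ hQP)
  have key : P * M * Q - μ • 1 = P * ((M - μ • 1) * Q) := by
    rw [sub_mul, Matrix.smul_mul, Matrix.one_mul, mul_sub, Matrix.mul_smul, hPQ,
      ← Matrix.mul_assoc]
  unfold eigMult
  rw [key, Matrix.toLin'_mul, Matrix.toLin'_mul]
  rw [LinearMap.ker_comp_of_ker_eq_bot _ (toLin'_isUnit hP)]
  exact finrank_ker_comp_unit _ hQ

lemma eigMult_inv (M : Matrix n n ℝ) (h : IsUnit M) {μ : ℝ} (hμ : μ ≠ 0) :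
    eigMult M⁻¹ μ⁻¹ = eigMult M μ := by
  have hdet : IsUnit M.det := by simpa using h.map Matrix.detMonoidHom
  have key : M⁻¹ - μ⁻¹ • 1 = (-μ⁻¹) • (M⁻¹ * (M - μ • 1)) := by
    have h1 : M⁻¹ * (M - μ • 1) = 1 - μ • M⁻¹ := by
      rw [mul_sub, Matrix.nonsing_inv_mul M hdet, Matrix.mul_smul, Matrix.mul_one]
    rw [h1, smul_sub, smul_smul, neg_mul, inv_mul_cancel₀ hμ]
    module
  unfold eigMult
  rw [key]
  have hiu : IsUnit M⁻¹ :=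
    @isUnit_of_invertible _ _ _ (invertibleOfRightInverse _ _ (Matrix.nonsing_inv_mul M hdet))
  have h2 : Matrix.toLin' ((-μ⁻¹) • (M⁻¹ * (M - μ • 1)))
      = (-μ⁻¹) • Matrix.toLin' (M⁻¹ * (M - μ • 1)) :=
    _root_.map_smul Matrix.toLin' _ _
  rw [h2, LinearMap.ker_smul _ _ (by simpa using hμ), Matrix.toLin'_mul,
    LinearMap.ker_comp_of_ker_eq_bot _ (toLin'_isUnit hiu)]

lemma eigMult_neg (M : Matrix n n ℝ) (μ : ℝ) : eigMult (-M) (-μ) = eigMult M μ := by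
  unfold eigMult
  have key : -M - (-μ) • 1 = (-1 : ℝ) • (M - μ • 1) := by
    rw [neg_smul, sub_neg_eq_add, neg_one_smul, neg_sub, sub_eq_neg_add]
  rw [key]
  have h2 : Matrix.toLin' ((-1 : ℝ) • (M - μ • 1)) = (-1 : ℝ) • Matrix.toLin' (M - μ • 1) :=
    _root_.map_smul Matrix.toLin' _ _
  rw [h2, LinearMap.ker_smul _ _ (by norm_num)]


lemma finrank_ker_toLin'_diagonal (w : n → ℝ) :
    Module.finrank ℝ (LinearMap.ker (Matrix.toLin' (Matrix.diagonal w)))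
      = Fintype.card {i // w i = 0} := by
  have hrange : Module.finrank ℝ (LinearMap.range (Matrix.toLin' (Matrix.diagonal w)))
      = Fintype.card {i // w i ≠ 0} :=
    Module.finrank_eq_of_rank_eq (LinearMap.rank_diagonal w)
  have hrn := LinearMap.finrank_range_add_finrank_ker (Matrix.toLin' (Matrix.diagonal w))
  rw [hrange, Module.finrank_pi] at hrn
  have hcompl : Fintype.card {i // w i ≠ 0} = Fintype.card n - Fintype.card {i // w i = 0} :=
    Fintype.card_subtype_compl _
  have hle : Fintype.card {i // w i = 0} ≤ Fintype.card n := Fintype.card_subtype_le _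
  omega

lemma eigMult_diagonal (c : n → ℝ) (μ : ℝ) :
    eigMult (Matrix.diagonal c) μ = Fintype.card {i // c i = μ} := by
  unfold eigMult
  have h1 : Matrix.diagonal c - μ • 1 = Matrix.diagonal (fun i => c i - μ) := by
    rw [Matrix.smul_one_eq_diagonal]
    rw [Matrix.diagonal_sub]
  rw [h1, finrank_ker_toLin'_diagonal]
  apply Fintype.card_congr
  apply Equiv.subtypeEquivRight
  intro i
  constructor <;> intro h <;> linarith

lemma eigMult_hermitian (A : Matrix n n ℝ) (hA : A.IsHermitian) (μ : ℝ) :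
    eigMult A μ = Fintype.card {i // hA.eigenvalues i = μ} := by
  have hU1 : (hA.eigenvectorUnitary : Matrix n n ℝ) * star (hA.eigenvectorUnitary : Matrix n n ℝ) = 1 :=
    (Unitary.mem_iff.mp hA.eigenvectorUnitary.2).2
  have hU2 : star (hA.eigenvectorUnitary : Matrix n n ℝ) * (hA.eigenvectorUnitary : Matrix n n ℝ) = 1 :=
    (Unitary.mem_iff.mp hA.eigenvectorUnitary.2).1
  have hspec : A = (hA.eigenvectorUnitary : Matrix n n ℝ) * Matrix.diagonal hA.eigenvalues
      * star (hA.eigenvectorUnitary : Matrix n n ℝ) := by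
    have := hA.spectral_theorem
    simpa using this
  conv_lhs => rw [hspec]
  rw [eigMult_conj _ _ _ hU1 hU2, eigMult_diagonal]


lemma count_inv_eq (A : Matrix n n ℝ) (hu : IsUnit A)
    (hSR : ∀ lam : ℝ, 0 < eigMult A lam → eigMult A (1/lam) = eigMult A lam) (lam : ℝ) :
    eigMult A lam⁻¹ = eigMult A lam := by
  rcases Nat.eq_zero_or_pos (eigMult A lam) with h0 | hpos
  · rcases Nat.eq_zero_or_pos (eigMult A lam⁻¹) with h0' | hpos'
    · omega
    · have := hSR _ hpos'
      rw [one_div, inv_inv] at this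
      omega
  · have := hSR _ hpos
    rw [one_div] at this
    exact this

lemma exists_sim (A : Matrix n n ℝ) (hA : A.IsHermitian) (hu : IsUnit A)
    (hSR : ∀ lam : ℝ, 0 < eigMult A lam → eigMult A (1/lam) = eigMult A lam) :
    ∃ R Rinv : Matrix n n ℝ, R * Rinv = 1 ∧ Rinv * R = 1 ∧ R * A = A⁻¹ * R := by
  classical
  set d : n → ℝ := hA.eigenvalues with hd
  set g : n → ℝ := fun i => (d i)⁻¹ with hg
  have hcount : ∀ lam : ℝ, Fintype.card {i // d i = lam⁻¹} = Fintype.card {i // d i = lam} := by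
    intro lam
    have h1 := eigMult_hermitian A hA lam
    have h2 := eigMult_hermitian A hA lam⁻¹
    rw [← h1, ← h2, count_inv_eq A hu hSR]
  have hfib : ∀ c : ℝ, Fintype.card {i // g i = c} = Fintype.card {i // d i = c} := by
    intro c
    have : Fintype.card {i // g i = c} = Fintype.card {i // d i = c⁻¹} := by
      apply Fintype.card_congr
      apply Equiv.subtypeEquivRight
      intro i
      simp only [hg]
      exact inv_eq_iff_eq_inv
    rw [this, hcount]
  let e : ∀ c : ℝ, {i // g i = c} ≃ {i // d i = c} := fun c => Fintype.equivOfCardEq (hfib c)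
  let σ : n ≃ n := Equiv.ofFiberEquiv e
  have hσ : ∀ i, d (σ i) = g i := fun i => Equiv.ofFiberEquiv_map e i
  -- eigenvalues nonzero
  have hd0 : ∀ i, d i ≠ 0 := by
    intro i hi
    have h0 := eigMult_zero_of_isUnit hu
    rw [eigMult_hermitian A hA 0] at h0
    have : Fintype.card {j // d j = (0:ℝ)} ≠ 0 := by
      have : Nonempty {j // d j = (0:ℝ)} := ⟨⟨i, hi⟩⟩
      simp [Fintype.card_ne_zero]
    exact this h0
  set U : Matrix n n ℝ := (hA.eigenvectorUnitary : Matrix n n ℝ) with hUdef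
  have hU1 : U * star U = 1 := (Unitary.mem_iff.mp hA.eigenvectorUnitary.2).2
  have hU2 : star U * U = 1 := (Unitary.mem_iff.mp hA.eigenvectorUnitary.2).1
  have hspec : A = U * Matrix.diagonal d * star U := by simpa using hA.spectral_theorem
  set W : Matrix n n ℝ := U.submatrix id σ with hWdef
  have hstarW : star W = (star U).submatrix σ id := by
    rw [hWdef]
    rfl
  have hsub : (Matrix.diagonal d).submatrix σ σ = Matrix.diagonal g := by
    rw [Matrix.submatrix_diagonal _ _ σ.injective]
    exact congrArg _ (funext fun i => hσ i)
  have hWW : W * star W = 1 := by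
    rw [hWdef, hstarW]
    have : U.submatrix id ⇑σ * (star U).submatrix ⇑σ id = (U * star U).submatrix id id :=
      Matrix.submatrix_mul_equiv U (star U) id σ id
    rw [this, hU1, Matrix.submatrix_id_id]
  have hWW2 : star W * W = 1 := by
    rw [hWdef, hstarW]
    have : (star U).submatrix ⇑σ id * U.submatrix id ⇑σ = (star U * U).submatrix ⇑σ ⇑σ := by
      have := Matrix.submatrix_mul_equiv (star U) U ⇑σ (Equiv.refl n) ⇑σ
      simpa using this
    rw [this, hU2]
    exact Matrix.submatrix_one_equiv σ
  have keyA : A = W * Matrix.diagonal g * star W := by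
    rw [hWdef, hstarW, ← hsub]
    have h1 : U.submatrix id ⇑σ * (Matrix.diagonal d).submatrix ⇑σ ⇑σ
        = (U * Matrix.diagonal d).submatrix id ⇑σ :=
      Matrix.submatrix_mul_equiv U (Matrix.diagonal d) id σ ⇑σ
    have h2 : (U * Matrix.diagonal d).submatrix id ⇑σ * (star U).submatrix ⇑σ id
        = (U * Matrix.diagonal d * star U).submatrix id id :=
      Matrix.submatrix_mul_equiv (U * Matrix.diagonal d) (star U) id σ id
    rw [h1, h2, Matrix.submatrix_id_id, hspec]
  have hAinv : A⁻¹ = U * Matrix.diagonal g * star U := by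
    apply Matrix.inv_eq_right_inv
    rw [hspec]
    calc U * Matrix.diagonal d * star U * (U * Matrix.diagonal g * star U)
        = U * Matrix.diagonal d * (star U * U) * Matrix.diagonal g * star U := by
          simp only [Matrix.mul_assoc]
      _ = U * (Matrix.diagonal d * Matrix.diagonal g) * star U := by
          rw [hU2, Matrix.mul_one]
          simp only [Matrix.mul_assoc]
      _ = 1 := by
          rw [Matrix.diagonal_mul_diagonal]
          have : (fun i => d i * g i) = fun _ => (1:ℝ) := by
            funext i
            simp [hg, mul_inv_cancel₀ (hd0 i)]
          rw [this, Matrix.diagonal_one, Matrix.mul_one, hU1]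
  refine ⟨U * star W, W * star U, ?_, ?_, ?_⟩
  · calc U * star W * (W * star U) = U * (star W * W) * star U := by simp only [Matrix.mul_assoc]
      _ = 1 := by rw [hWW2, Matrix.mul_one, hU1]
  · calc W * star U * (U * star W) = W * (star U * U) * star W := by simp only [Matrix.mul_assoc]
      _ = 1 := by rw [hU2, Matrix.mul_one, hWW]
  · calc U * star W * A = U * star W * (W * Matrix.diagonal g * star W) := by rw [← keyA]
      _ = U * (star W * W) * Matrix.diagonal g * star W := by simp only [Matrix.mul_assoc]
      _ = U * Matrix.diagonal g * star W := by rw [hWW2, Matrix.mul_one]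
      _ = U * Matrix.diagonal g * (star U * U) * star W := by rw [hU2, Matrix.mul_one]
      _ = (U * Matrix.diagonal g * star U) * (U * star W) := by simp only [Matrix.mul_assoc]
      _ = A⁻¹ * (U * star W) := by rw [← hAinv]

end Pf

namespace Pf2

def vOne (m : ℕ) : Fin m → ℝ := fun _ => 1
def vE0 (m : ℕ) : Fin m → ℝ := fun i => if i.val = 0 then 1 else 0
def vEm (m : ℕ) : Fin m → ℝ := fun i => if i.val = m - 1 then 1 else 0
def vS (m : ℕ) : Fin m → ℝ := fun i =>
  if i.val = 0 ∨ i.val = m - 1 then 0 else if i.val ≤ m / 2 - 1 then 1 else -1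

def revF {m : ℕ} (i : Fin m) : Fin m := ⟨m - 1 - i.val, by have := i.isLt; omega⟩

def MR (m : ℕ) : Matrix (Fin m) (Fin m) ℝ := fun i j => if j = revF i then 1 else 0
def MD (m : ℕ) : Matrix (Fin m) (Fin m) ℝ := Matrix.diagonal (vS m)
def MT (m : ℕ) : Matrix (Fin m) (Fin m) ℝ := MD m * MR m

variable {m : ℕ}

lemma revF_revF (i : Fin m) : revF (revF i) = i := by
  have := i.isLt
  simp only [revF]
  ext
  simp
  omega

lemma revF_eq_iff (i j : Fin m) : (j = revF i) ↔ (i = revF j) := by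
  have hi := i.isLt; have hj := j.isLt
  simp only [revF, Fin.ext_iff]
  constructor <;> intro h <;> simp_all <;> omega

lemma vE0_revF (hm : 1 < m) (i : Fin m) : vE0 m (revF i) = vEm m i := by
  have := i.isLt
  dsimp only [vE0, vEm, revF]
  by_cases h : i.val = m - 1 <;> simp [h] <;> omega

lemma vEm_revF (hm : 1 < m) (i : Fin m) : vEm m (revF i) = vE0 m i := by
  have := i.isLt
  dsimp only [vE0, vEm, revF]
  by_cases h : i.val = 0 <;> simp [h] <;> omega

lemma vS_revF (hm : 1 < m) (heven : Even m) (i : Fin m) : vS m (revF i) = -vS m i := by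
  obtain ⟨k, hk⟩ := heven
  have hi := i.isLt
  dsimp only [vS, revF]
  split_ifs <;> (try norm_num) <;> omega

lemma vS_mul_self (hm : 1 < m) (i : Fin m) :
    vS m i * vS m i = 1 - vE0 m i - vEm m i := by
  simp only [vS, vE0, vEm]
  by_cases h0 : i.val = 0
  · simp [h0]; omega
  by_cases h1 : i.val = m - 1
  · simp [h0, h1]
    omega
  rw [if_neg (by omega), if_neg h0, if_neg h1]
  by_cases h2 : i.val ≤ m / 2 - 1 <;> simp [h2]

-- mulVec lemmas
lemma MR_mulVec (u : Fin m → ℝ) : MR m *ᵥ u = fun i => u (revF i) := by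
  funext i
  simp [MR, Matrix.mulVec, dotProduct, ite_mul]

lemma MR_mulVec_one : MR m *ᵥ vOne m = vOne m := by
  rw [MR_mulVec]; rfl

lemma MR_mulVec_e0 (hm : 1 < m) : MR m *ᵥ vE0 m = vEm m := by
  rw [MR_mulVec]; funext i; rw [vE0_revF hm]

lemma MR_mulVec_em (hm : 1 < m) : MR m *ᵥ vEm m = vE0 m := by
  rw [MR_mulVec]; funext i; rw [vEm_revF hm]

lemma MR_mulVec_s (hm : 1 < m) (heven : Even m) : MR m *ᵥ vS m = -vS m := by
  rw [MR_mulVec]; funext i; rw [vS_revF hm heven]; rfl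

lemma MD_mulVec (u : Fin m → ℝ) : MD m *ᵥ u = fun i => vS m i * u i := by
  funext i
  simp [MD, Matrix.mulVec_diagonal]

lemma MD_mulVec_one : MD m *ᵥ vOne m = vS m := by
  rw [MD_mulVec]; funext i; simp [vOne]

lemma MD_mulVec_e0 : MD m *ᵥ vE0 m = 0 := by
  rw [MD_mulVec]; funext i
  simp only [vS, vE0]
  by_cases h : i.val = 0 <;> simp [h]

lemma MD_mulVec_em : MD m *ᵥ vEm m = 0 := by
  rw [MD_mulVec]; funext i
  simp only [vS, vEm]
  by_cases h : i.val = m - 1 <;> simp [h]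

lemma MD_mulVec_s (hm : 1 < m) : MD m *ᵥ vS m = vOne m - vE0 m - vEm m := by
  rw [MD_mulVec]; funext i
  have := vS_mul_self hm i
  simpa [vOne] using this

lemma MT_mulVec (u : Fin m → ℝ) : MT m *ᵥ u = MD m *ᵥ (MR m *ᵥ u) := by
  rw [MT, ← Matrix.mulVec_mulVec]

lemma MT_mulVec_one : MT m *ᵥ vOne m = vS m := by
  rw [MT_mulVec, MR_mulVec_one, MD_mulVec_one]

lemma MT_mulVec_e0 (hm : 1 < m) : MT m *ᵥ vE0 m = 0 := by
  rw [MT_mulVec, MR_mulVec_e0 hm, MD_mulVec_em]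

lemma MT_mulVec_em (hm : 1 < m) : MT m *ᵥ vEm m = 0 := by
  rw [MT_mulVec, MR_mulVec_em hm, MD_mulVec_e0]

lemma MT_mulVec_s (hm : 1 < m) (heven : Even m) :
    MT m *ᵥ vS m = vE0 m + vEm m - vOne m := by
  rw [MT_mulVec, MR_mulVec_s hm heven, Matrix.mulVec_neg, MD_mulVec_s hm]
  abel

-- transpose lemmas
lemma MR_transpose : (MR m)ᵀ = MR m := by
  ext i j
  simp only [Matrix.transpose_apply, MR]
  rw [if_congr (revF_eq_iff j i) rfl rfl]

lemma MD_transpose : (MD m)ᵀ = MD m := Matrix.diagonal_transpose _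

lemma MR_mul_MD (hm : 1 < m) (heven : Even m) : MR m * MD m = -(MT m) := by
  ext i j
  simp only [MT, MD, Matrix.mul_diagonal, Matrix.diagonal_mul, Matrix.neg_apply, MR]
  by_cases h : j = revF i
  · subst h; simp [vS_revF hm heven]
  · simp [h]

lemma MT_transpose (hm : 1 < m) (heven : Even m) : (MT m)ᵀ = -(MT m) := by
  rw [MT, Matrix.transpose_mul, MR_transpose, MD_transpose, MR_mul_MD hm heven]
  rfl


-- sums
lemma sum_vOne (hm : 0 < m) : ∑ i : Fin m, vOne m i = (m : ℝ) := by
  simp [vOne]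

lemma sum_vE0 (hm : 0 < m) : ∑ i : Fin m, vE0 m i = 1 := by
  have key : ∀ i : Fin m, vE0 m i = if i = ⟨0, hm⟩ then 1 else 0 := by
    intro i
    simp [vE0, Fin.ext_iff]
  simp_rw [key]
  simp

lemma sum_vEm (hm : 0 < m) : ∑ i : Fin m, vEm m i = 1 := by
  have key : ∀ i : Fin m, vEm m i = if i = ⟨m - 1, by omega⟩ then 1 else 0 := by
    intro i
    simp [vEm, Fin.ext_iff]
  simp_rw [key]
  simp

lemma sum_vS (hm : 1 < m) (heven : Even m) : ∑ i : Fin m, vS m i = 0 := by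
  have h1 : ∑ i : Fin m, vS m (revF i) = ∑ i : Fin m, vS m i :=
    Equiv.sum_comp (Function.Involutive.toPerm revF revF_revF) (vS m)
  have h2 : ∑ i : Fin m, vS m (revF i) = ∑ i : Fin m, -vS m i := by
    apply Finset.sum_congr rfl
    intro i _
    exact vS_revF hm heven i
  rw [h2, Finset.sum_neg_distrib] at h1
  linarith

-- dot products
lemma dot_one_one (hm : 0 < m) : vOne m ⬝ᵥ vOne m = (m : ℝ) := by
  simpa [dotProduct, vOne] using sum_vOne hm

lemma dot_one_e0 (hm : 0 < m) : vOne m ⬝ᵥ vE0 m = 1 := by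
  simpa [dotProduct, vOne] using sum_vE0 hm
lemma dot_e0_one (hm : 0 < m) : vE0 m ⬝ᵥ vOne m = 1 := by
  simpa [dotProduct, vOne, mul_comm] using sum_vE0 hm
lemma dot_one_em (hm : 0 < m) : vOne m ⬝ᵥ vEm m = 1 := by
  simpa [dotProduct, vOne] using sum_vEm hm
lemma dot_em_one (hm : 0 < m) : vEm m ⬝ᵥ vOne m = 1 := by
  simpa [dotProduct, vOne, mul_comm] using sum_vEm hm
lemma dot_one_s (hm : 1 < m) (heven : Even m) : vOne m ⬝ᵥ vS m = 0 := by
  simpa [dotProduct, vOne] using sum_vS hm heven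
lemma dot_s_one (hm : 1 < m) (heven : Even m) : vS m ⬝ᵥ vOne m = 0 := by
  simpa [dotProduct, vOne, mul_comm] using sum_vS hm heven

lemma dot_e0_e0 (hm : 0 < m) : vE0 m ⬝ᵥ vE0 m = 1 := by
  have key : ∀ i : Fin m, vE0 m i * vE0 m i = vE0 m i := by
    intro i
    simp only [vE0]
    split_ifs <;> norm_num
  simpa [dotProduct, key] using sum_vE0 hm
lemma dot_em_em (hm : 0 < m) : vEm m ⬝ᵥ vEm m = 1 := by
  have key : ∀ i : Fin m, vEm m i * vEm m i = vEm m i := by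
    intro i
    simp only [vEm]
    split_ifs <;> norm_num
  simpa [dotProduct, key] using sum_vEm hm
lemma dot_e0_em (hm : 1 < m) : vE0 m ⬝ᵥ vEm m = 0 := by
  apply Finset.sum_eq_zero
  intro i _
  simp only [vE0, vEm]
  split_ifs <;> (try norm_num) <;> omega
lemma dot_em_e0 (hm : 1 < m) : vEm m ⬝ᵥ vE0 m = 0 := by
  apply Finset.sum_eq_zero
  intro i _
  simp only [vE0, vEm]
  split_ifs <;> (try norm_num) <;> omega
lemma dot_s_e0 : vS m ⬝ᵥ vE0 m = 0 := by
  apply Finset.sum_eq_zero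
  intro i _
  simp only [vS, vE0]
  split_ifs <;> (try norm_num) <;> omega
lemma dot_e0_s : vE0 m ⬝ᵥ vS m = 0 := by
  apply Finset.sum_eq_zero
  intro i _
  simp only [vS, vE0]
  split_ifs <;> (try norm_num) <;> omega
lemma dot_s_em : vS m ⬝ᵥ vEm m = 0 := by
  apply Finset.sum_eq_zero
  intro i _
  simp only [vS, vEm]
  split_ifs <;> (try norm_num) <;> omega
lemma dot_em_s : vEm m ⬝ᵥ vS m = 0 := by
  apply Finset.sum_eq_zero
  intro i _
  simp only [vS, vEm]
  split_ifs <;> (try norm_num) <;> omega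
lemma dot_s_s (hm : 1 < m) : vS m ⬝ᵥ vS m = (m : ℝ) - 2 := by
  have key : ∀ i : Fin m, vS m i * vS m i = vOne m i - vE0 m i - vEm m i := by
    intro i
    rw [vS_mul_self hm i]
    rfl
  have : vS m ⬝ᵥ vS m = ∑ i : Fin m, (vOne m i - vE0 m i - vEm m i) := by
    apply Finset.sum_congr rfl
    intro i _
    exact key i
  rw [this, Finset.sum_sub_distrib, Finset.sum_sub_distrib,
    sum_vOne (by omega), sum_vE0 (by omega), sum_vEm (by omega)]
  ring

-- vecMulVec algebra
lemma vmv_mul_vmv (u v w z : Fin m → ℝ) :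
    vecMulVec u v * vecMulVec w z = (v ⬝ᵥ w) • vecMulVec u z := by
  ext i j
  simp only [Matrix.mul_apply, Matrix.vecMulVec_apply, Matrix.smul_apply,
    dotProduct, smul_eq_mul, Finset.sum_mul]
  apply Finset.sum_congr rfl
  intro k _
  ring

lemma mul_vmv (M : Matrix (Fin m) (Fin m) ℝ) (u v : Fin m → ℝ) :
    M * vecMulVec u v = vecMulVec (M *ᵥ u) v := by
  ext i j
  simp only [Matrix.mul_apply, Matrix.vecMulVec_apply, Matrix.mulVec,
    dotProduct, Finset.sum_mul]
  apply Finset.sum_congr rfl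
  intro k _
  ring

lemma vmv_mul (u v : Fin m → ℝ) (M : Matrix (Fin m) (Fin m) ℝ) :
    vecMulVec u v * M = vecMulVec u (Mᵀ *ᵥ v) := by
  ext i j
  simp only [Matrix.mul_apply, Matrix.vecMulVec_apply, Matrix.mulVec,
    dotProduct, Matrix.transpose_apply, Finset.mul_sum]
  apply Finset.sum_congr rfl
  intro k _
  ring

lemma vmv_add_left (u w v : Fin m → ℝ) :
    vecMulVec (u + w) v = vecMulVec u v + vecMulVec w v := by
  ext i j; simp [Matrix.vecMulVec_apply]; ring
lemma vmv_add_right (u v w : Fin m → ℝ) :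
    vecMulVec u (v + w) = vecMulVec u v + vecMulVec u w := by
  ext i j; simp [Matrix.vecMulVec_apply]; ring
lemma vmv_sub_left (u w v : Fin m → ℝ) :
    vecMulVec (u - w) v = vecMulVec u v - vecMulVec w v := by
  ext i j; simp [Matrix.vecMulVec_apply]; ring
lemma vmv_sub_right (u v w : Fin m → ℝ) :
    vecMulVec u (v - w) = vecMulVec u v - vecMulVec u w := by
  ext i j; simp [Matrix.vecMulVec_apply]; ring
lemma vmv_neg_left (u v : Fin m → ℝ) : vecMulVec (-u) v = -vecMulVec u v := by
  ext i j; simp [Matrix.vecMulVec_apply]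
lemma vmv_neg_right (u v : Fin m → ℝ) : vecMulVec u (-v) = -vecMulVec u v := by
  ext i j; simp [Matrix.vecMulVec_apply]
lemma vmv_zero_left (v : Fin m → ℝ) : vecMulVec (0 : Fin m → ℝ) v = 0 := by
  ext i j; simp [Matrix.vecMulVec_apply]
lemma vmv_zero_right (u : Fin m → ℝ) : vecMulVec u (0 : Fin m → ℝ) = 0 := by
  ext i j; simp [Matrix.vecMulVec_apply]
lemma vmv_smul_left (c : ℝ) (u v : Fin m → ℝ) :
    vecMulVec (c • u) v = c • vecMulVec u v := by
  ext i j; simp [Matrix.vecMulVec_apply]; ring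
lemma vmv_smul_right (c : ℝ) (u v : Fin m → ℝ) :
    vecMulVec u (c • v) = c • vecMulVec u v := by
  ext i j; simp [Matrix.vecMulVec_apply]; ring


-- matrix-matrix products
lemma MR_mul_MR : MR m * MR m = 1 := by
  ext i j
  simp only [Matrix.mul_apply, MR, ite_mul, one_mul, zero_mul, Matrix.one_apply]
  rw [Finset.sum_ite_eq' Finset.univ (revF i) (fun k => if j = revF k then (1:ℝ) else 0)]
  simp only [Finset.mem_univ, if_true, revF_revF]
  exact if_congr eq_comm rfl rfl

lemma MD_mul_MR : MD m * MR m = MT m := rfl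

lemma MD_mul_MD (hm : 1 < m) :
    MD m * MD m = 1 - vecMulVec (vE0 m) (vE0 m) - vecMulVec (vEm m) (vEm m) := by
  ext i j
  simp only [MD, Matrix.diagonal_mul_diagonal, Matrix.sub_apply, Matrix.one_apply,
    Matrix.vecMulVec_apply, Matrix.diagonal_apply]
  by_cases h : i = j
  · subst h
    rw [if_pos rfl, if_pos rfl, vS_mul_self hm i]
    have h0 : vE0 m i * vE0 m i = vE0 m i := by
      simp only [vE0]; split_ifs <;> norm_num
    have h1 : vEm m i * vEm m i = vEm m i := by
      simp only [vEm]; split_ifs <;> norm_num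
    rw [h0, h1]
  · rw [if_neg h, if_neg h]
    have h0 : vE0 m i * vE0 m j = 0 := by
      simp only [vE0]
      split_ifs with h1 h2
      · exact absurd (Fin.ext (h1.trans h2.symm)) h
      all_goals norm_num
    have h1 : vEm m i * vEm m j = 0 := by
      simp only [vEm]
      split_ifs with h1 h2
      · exact absurd (Fin.ext (h1.trans h2.symm)) h
      all_goals norm_num
    rw [h0, h1]
    ring

lemma MT_mul_MR (hm : 1 < m) (heven : Even m) : MT m * MR m = MD m := by
  rw [MT, Matrix.mul_assoc, MR_mul_MR, Matrix.mul_one]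

lemma MR_mul_MT (hm : 1 < m) (heven : Even m) : MR m * MT m = -(MD m) := by
  rw [MT, ← Matrix.mul_assoc, MR_mul_MD hm heven, Matrix.neg_mul, MT,
    Matrix.mul_assoc, MR_mul_MR, Matrix.mul_one]

lemma MD_mul_MT (hm : 1 < m) (heven : Even m) :
    MD m * MT m = MR m - vecMulVec (vE0 m) (vEm m) - vecMulVec (vEm m) (vE0 m) := by
  rw [MT, ← Matrix.mul_assoc, MD_mul_MD hm, Matrix.sub_mul, Matrix.sub_mul, Matrix.one_mul,
    vmv_mul, vmv_mul, MR_transpose, MR_mulVec_e0 hm, MR_mulVec_em hm]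

lemma MT_mul_MD (hm : 1 < m) (heven : Even m) :
    MT m * MD m = -(MR m - vecMulVec (vE0 m) (vEm m) - vecMulVec (vEm m) (vE0 m)) := by
  have : MT m * MD m = MD m * (MR m * MD m) := by rw [← Matrix.mul_assoc, MT]
  rw [this, MR_mul_MD hm heven, Matrix.mul_neg, MD_mul_MT hm heven]

lemma MT_mul_MT (hm : 1 < m) (heven : Even m) :
    MT m * MT m = -(1 - vecMulVec (vE0 m) (vE0 m) - vecMulVec (vEm m) (vEm m)) := by
  have h1 : MT m * MT m = MD m * (MR m * MT m) := by rw [← Matrix.mul_assoc]; rfl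
  rw [h1, MR_mul_MT hm heven, Matrix.mul_neg, MD_mul_MD hm]

-- the matrices
def MB (m : ℕ) : Matrix (Fin m) (Fin m) ℝ :=
  vecMulVec (vOne m) (vOne m) - MR m + vecMulVec (vE0 m) (vEm m)
    + vecMulVec (vEm m) (vE0 m) - vecMulVec (vE0 m) (vE0 m)

def MC (m : ℕ) : Matrix (Fin m) (Fin m) ℝ :=
  MR m - vecMulVec (vE0 m) (vEm m) - vecMulVec (vEm m) (vE0 m) + vecMulVec (vE0 m) (vE0 m)
    - vecMulVec (vOne m) (vEm m) - vecMulVec (vEm m) (vOne m)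
    + (m : ℝ) • vecMulVec (vEm m) (vEm m)

def MX (m : ℕ) : Matrix (Fin m) (Fin m) ℝ :=
  vecMulVec (vOne m) (vOne m) - ((m : ℝ) - 1) • vecMulVec (vEm m) (vOne m)
    - vecMulVec (vEm m) (vEm m) + ((m : ℝ) / 2) • MD m - (((m : ℝ) - 2) / 2) • MT m
    - vecMulVec (vS m) (vE0 m) - vecMulVec (vOne m) (vS m) + vecMulVec (vEm m) (vS m)


lemma vmv_mulVec (u v w : Fin m → ℝ) : vecMulVec u v *ᵥ w = (v ⬝ᵥ w) • u := by
  funext i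
  simp only [Matrix.mulVec, dotProduct, Matrix.vecMulVec_apply, Pi.smul_apply,
    smul_eq_mul, Finset.sum_mul]
  apply Finset.sum_congr rfl
  intro k _
  ring

set_option maxHeartbeats 1000000 in
lemma MB_mul_MC (hm : 3 < m) (heven : Even m) : MB m * MC m = -1 := by
  have hm' : 1 < m := by omega
  have h0 : 0 < m := by omega
  simp only [MB, MC, MX,
    sub_mul, mul_sub, add_mul, mul_add, neg_mul, mul_neg, smul_mul_assoc, mul_smul_comm,
    Matrix.mul_one, Matrix.one_mul,
    vmv_mul_vmv, mul_vmv, vmv_mul, vmv_mulVec, vmv_smul_left, vmv_smul_right,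
    MR_mul_MR, MD_mul_MR, MD_mul_MD hm', MR_mul_MD hm' heven, MT_mul_MR hm' heven,
    MR_mul_MT hm' heven, MD_mul_MT hm' heven, MT_mul_MD hm' heven, MT_mul_MT hm' heven,
    MR_transpose, MD_transpose, MT_transpose hm' heven,
    Matrix.neg_mulVec, Matrix.one_mulVec, Matrix.transpose_one,
    MR_mulVec_one, MR_mulVec_e0 hm', MR_mulVec_em hm', MR_mulVec_s hm' heven,
    MD_mulVec_one, MD_mulVec_e0, MD_mulVec_em, MD_mulVec_s hm',
    MT_mulVec_one, MT_mulVec_e0 hm', MT_mulVec_em hm', MT_mulVec_s hm' heven,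
    vmv_add_left, vmv_add_right, vmv_sub_left, vmv_sub_right, vmv_neg_left, vmv_neg_right,
    vmv_zero_left, vmv_zero_right,
    dot_one_one h0, dot_one_e0 h0, dot_e0_one h0, dot_one_em h0, dot_em_one h0,
    dot_one_s hm' heven, dot_s_one hm' heven, dot_e0_e0 h0, dot_em_em h0,
    dot_e0_em hm', dot_em_e0 hm', dot_s_e0, dot_e0_s, dot_s_em, dot_em_s, dot_s_s hm',
    smul_smul, zero_smul, smul_zero, sub_zero, add_zero, zero_add, zero_sub, neg_neg, smul_neg]
  module

set_option maxHeartbeats 1000000 in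
lemma MX_mul_MB (hm : 3 < m) (heven : Even m) : MX m * MB m = MC m * MX m := by
  have hm' : 1 < m := by omega
  have h0 : 0 < m := by omega
  simp only [MB, MC, MX,
    sub_mul, mul_sub, add_mul, mul_add, neg_mul, mul_neg, smul_mul_assoc, mul_smul_comm,
    Matrix.mul_one, Matrix.one_mul,
    vmv_mul_vmv, mul_vmv, vmv_mul, vmv_mulVec, vmv_smul_left, vmv_smul_right,
    MR_mul_MR, MD_mul_MR, MD_mul_MD hm', MR_mul_MD hm' heven, MT_mul_MR hm' heven,
    MR_mul_MT hm' heven, MD_mul_MT hm' heven, MT_mul_MD hm' heven, MT_mul_MT hm' heven,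
    MR_transpose, MD_transpose, MT_transpose hm' heven,
    Matrix.neg_mulVec, Matrix.one_mulVec, Matrix.transpose_one,
    MR_mulVec_one, MR_mulVec_e0 hm', MR_mulVec_em hm', MR_mulVec_s hm' heven,
    MD_mulVec_one, MD_mulVec_e0, MD_mulVec_em, MD_mulVec_s hm',
    MT_mulVec_one, MT_mulVec_e0 hm', MT_mulVec_em hm', MT_mulVec_s hm' heven,
    vmv_add_left, vmv_add_right, vmv_sub_left, vmv_sub_right, vmv_neg_left, vmv_neg_right,
    vmv_zero_left, vmv_zero_right,
    dot_one_one h0, dot_one_e0 h0, dot_e0_one h0, dot_one_em h0, dot_em_one h0,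
    dot_one_s hm' heven, dot_s_one hm' heven, dot_e0_e0 h0, dot_em_em h0,
    dot_e0_em hm', dot_em_e0 hm', dot_s_e0, dot_e0_s, dot_s_em, dot_em_s, dot_s_s hm',
    smul_smul, zero_smul, smul_zero, sub_zero, add_zero, zero_add, zero_sub, neg_neg, smul_neg]
  module

set_option maxHeartbeats 1000000 in
lemma MX_mul_MX (hm : 3 < m) (heven : Even m) : MX m * MX m = ((m : ℝ) - 1) • 1 := by
  have hm' : 1 < m := by omega
  have h0 : 0 < m := by omega
  simp only [MB, MC, MX,
    sub_mul, mul_sub, add_mul, mul_add, neg_mul, mul_neg, smul_mul_assoc, mul_smul_comm,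
    Matrix.mul_one, Matrix.one_mul,
    vmv_mul_vmv, mul_vmv, vmv_mul, vmv_mulVec, vmv_smul_left, vmv_smul_right,
    MR_mul_MR, MD_mul_MR, MD_mul_MD hm', MR_mul_MD hm' heven, MT_mul_MR hm' heven,
    MR_mul_MT hm' heven, MD_mul_MT hm' heven, MT_mul_MD hm' heven, MT_mul_MT hm' heven,
    MR_transpose, MD_transpose, MT_transpose hm' heven,
    Matrix.neg_mulVec, Matrix.one_mulVec, Matrix.transpose_one,
    MR_mulVec_one, MR_mulVec_e0 hm', MR_mulVec_em hm', MR_mulVec_s hm' heven,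
    MD_mulVec_one, MD_mulVec_e0, MD_mulVec_em, MD_mulVec_s hm',
    MT_mulVec_one, MT_mulVec_e0 hm', MT_mulVec_em hm', MT_mulVec_s hm' heven,
    vmv_add_left, vmv_add_right, vmv_sub_left, vmv_sub_right, vmv_neg_left, vmv_neg_right,
    vmv_zero_left, vmv_zero_right,
    dot_one_one h0, dot_one_e0 h0, dot_e0_one h0, dot_one_em h0, dot_em_one h0,
    dot_one_s hm' heven, dot_s_one hm' heven, dot_e0_e0 h0, dot_em_em h0,
    dot_e0_em hm', dot_em_e0 hm', dot_s_e0, dot_e0_s, dot_s_em, dot_em_s, dot_s_s hm',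
    smul_smul, zero_smul, smul_zero, sub_zero, add_zero, zero_add, zero_sub, neg_neg, smul_neg]
  module

lemma Bmat_eq_MB (hm : 3 < m) : Bmat m = MB m := by
  ext i j
  have hi := i.isLt
  have hj := j.isLt
  simp only [Bmat, MB, Matrix.sub_apply, Matrix.add_apply, Matrix.vecMulVec_apply,
    MR, vOne, vE0, vEm, revF, Fin.ext_iff]
  split_ifs <;> (try norm_num) <;> omega

lemma MB_isUnit (hm : 3 < m) (heven : Even m) : IsUnit (MB m) :=
  @isUnit_of_invertible _ _ _ (invertibleOfRightInverse _ (-(MC m)) (by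
    rw [Matrix.mul_neg, MB_mul_MC hm heven, neg_neg]))

lemma MB_inv (hm : 3 < m) (heven : Even m) : (MB m)⁻¹ = -(MC m) :=
  Matrix.inv_eq_right_inv (by rw [Matrix.mul_neg, MB_mul_MC hm heven, neg_neg])

lemma MX_right_inv (hm : 3 < m) (heven : Even m) :
    MX m * (((m : ℝ) - 1)⁻¹ • MX m) = 1 := by
  have hne : (m : ℝ) - 1 ≠ 0 := by
    have : (3 : ℝ) < (m : ℝ) := by exact_mod_cast hm
    linarith
  rw [mul_smul_comm, MX_mul_MX hm heven, smul_smul, inv_mul_cancel₀ hne, one_smul]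

lemma MX_left_inv (hm : 3 < m) (heven : Even m) :
    (((m : ℝ) - 1)⁻¹ • MX m) * MX m = 1 := by
  have hne : (m : ℝ) - 1 ≠ 0 := by
    have : (3 : ℝ) < (m : ℝ) := by exact_mod_cast hm
    linarith
  rw [Matrix.smul_mul, MX_mul_MX hm heven, smul_smul, inv_mul_cancel₀ hne, one_smul]

end Pf2

open Kronecker in
lemma neg_kron {α β : Type} [Fintype α] [Fintype β] (P : Matrix α α ℝ) (Q : Matrix β β ℝ) :
    (-P) ⊗ₖ Q = -(P ⊗ₖ Q) := by
  ext i j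
  simp [Matrix.kroneckerMap_apply]

-- debug: view normal form


/-- for even `m > 3` and `G` nonsingular with property (SR), `F₁^m(G)` is
nonsingular and satisfies property (-SR). -/
theorem stmt_19 (m : ℕ) (hm : 3 < m) (heven : Even m)
    (V : Type) [Fintype V] [DecidableEq V] (G : SimpleGraph V) [DecidableRel G.Adj]
    (hns : IsUnit (G.adjMatrix ℝ))
    (hSR : ∀ lam : ℝ, 0 < eigMult (G.adjMatrix ℝ) lam →
      eigMult (G.adjMatrix ℝ) (1 / lam) = eigMult (G.adjMatrix ℝ) lam) :
    IsUnit (Matrix.kroneckerMap (· * ·) (Bmat m) (G.adjMatrix ℝ)) ∧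
    ∀ μ : ℝ, 0 < eigMult (Matrix.kroneckerMap (· * ·) (Bmat m) (G.adjMatrix ℝ)) μ →
      eigMult (Matrix.kroneckerMap (· * ·) (Bmat m) (G.adjMatrix ℝ)) (-(1 / μ)) =
        eigMult (Matrix.kroneckerMap (· * ·) (Bmat m) (G.adjMatrix ℝ)) μ := by
  classical
  set A := G.adjMatrix ℝ with hA
  have hAH : A.IsHermitian := by
    rw [Matrix.IsHermitian, Matrix.conjTranspose_eq_transpose_of_trivial]
    exact SimpleGraph.isSymm_adjMatrix G
  obtain ⟨R, Rinv, hRR, hRR2, hRA⟩ := Pf.exists_sim A hAH hns hSR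
  have hdetA : IsUnit A.det := by simpa using hns.map Matrix.detMonoidHom
  have hA1 : A * A⁻¹ = 1 := Matrix.mul_nonsing_inv A hdetA
  have hBeq : Bmat m = Pf2.MB m := Pf2.Bmat_eq_MB hm
  rw [hBeq]
  set K := Matrix.kroneckerMap (· * ·) (Pf2.MB m) A with hK
  have hKinv1 : K * Matrix.kroneckerMap (· * ·) (-(Pf2.MC m)) A⁻¹ = 1 := by
    rw [hK, ← Matrix.mul_kronecker_mul]
    rw [show Pf2.MB m * -(Pf2.MC m) = 1 by
      rw [Matrix.mul_neg, Pf2.MB_mul_MC hm heven, neg_neg]]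
    rw [hA1, Matrix.one_kronecker_one]
  have hKu : IsUnit K :=
    @isUnit_of_invertible _ _ _ (invertibleOfRightInverse _ _ hKinv1)
  have hKinv : K⁻¹ = Matrix.kroneckerMap (· * ·) (-(Pf2.MC m)) A⁻¹ :=
    Matrix.inv_eq_right_inv hKinv1
  set Y := Matrix.kroneckerMap (· * ·) (Pf2.MX m) R with hY
  set Yinv := Matrix.kroneckerMap (· * ·) (((m : ℝ) - 1)⁻¹ • Pf2.MX m) Rinv with hYinv
  have hYY : Y * Yinv = 1 := by
    rw [hY, hYinv, ← Matrix.mul_kronecker_mul, Pf2.MX_right_inv hm heven, hRR,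
      Matrix.one_kronecker_one]
  have hYY2 : Yinv * Y = 1 := by
    rw [hY, hYinv, ← Matrix.mul_kronecker_mul, Pf2.MX_left_inv hm heven, hRR2,
      Matrix.one_kronecker_one]
  have hnegK : -K⁻¹ = Matrix.kroneckerMap (· * ·) (Pf2.MC m) A⁻¹ := by
    rw [hKinv, neg_kron, neg_neg]
  have hSim : Y * K = (-K⁻¹) * Y := by
    rw [hnegK, hY, hK, ← Matrix.mul_kronecker_mul, ← Matrix.mul_kronecker_mul,
      Pf2.MX_mul_MB hm heven, hRA]
  have hconj : Y * K * Yinv = -K⁻¹ := by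
    rw [hSim, Matrix.mul_assoc, hYY, Matrix.mul_one]
  refine ⟨hKu, ?_⟩
  intro μ hpos
  have hμ : μ ≠ 0 := Pf.eigMult_pos_ne_zero hKu hpos
  calc eigMult K (-(1/μ)) = eigMult (Y * K * Yinv) (-(1/μ)) :=
        (Pf.eigMult_conj K Y Yinv hYY hYY2 _).symm
    _ = eigMult (-(K⁻¹)) (-(1/μ)) := by rw [hconj]
    _ = eigMult K⁻¹ (1/μ) := Pf.eigMult_neg _ _
    _ = eigMult K μ := by rw [one_div]; exact Pf.eigMult_inv K hKu hμ

end
end
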